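/- Let K be a field of characteristic p and f_1, ..., f_n ∈ K be such that the extensions K(α_i) with α_i^p - α_i = f_i are pairwise linearly disjoint of degree p^n in total. Then for a_1,...,a_n, b_1,...,b_n ∈ F_p with (b_1,...,b_n) ≠ 0, the equality K(a_1α_1+...+a_nα_n) = K(b_1α_1+...+b_nα_n) holds if and only if (a_1,...,a_n) = c(b_1,...,b_n) for some c ∈ F_p. -/

import Mathlib

/-- For an AS-basis `α_1,…,α_n` (with `α_i^p - α_i = f_i ∈ K`, `[K(α):K] = p^n`)
and nonzero tuples `a, b ∈ 𝔽_p^n`, one has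
`K(Σ a_i α_i) = K(Σ b_i α_i)` iff `a = c • b` for some `c ∈ 𝔽_p`. -/
theorem stmt3 (p : ℕ) [Fact p.Prime] {K L : Type*} [Field K] [Field L]
    [Algebra K L] [CharP K p] (n : ℕ) (α : Fin n → L) (f : Fin n → K)
    (hAS : ∀ i, α i ^ p - α i = algebraMap K L (f i))
    (hgen : Algebra.adjoin K (Set.range α) = ⊤)
    (hdeg : Module.finrank K L = p ^ n)
    (a b : Fin n → ZMod p) (ha : a ≠ 0) (hb : b ≠ 0) :
    Algebra.adjoin K {(∑ i, (a i).val • α i : L)} =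
      Algebra.adjoin K {(∑ i, (b i).val • α i : L)} ↔
    ∃ c : ZMod p, a = c • b := by
  classical
  have hp := (Fact.out : p.Prime)
  set m : (Fin n → Fin p) → L := fun e => ∏ i, α i ^ (e i : ℕ) with hm
  have hαp : ∀ i, α i ^ p = α i + algebraMap K L (f i) := by
    intro i; have := hAS i; linear_combination this
  -- monomial membership
  have hmono : ∀ (N : ℕ) (d : Fin n → ℕ), (∑ i, d i) = N →
      (∏ i, α i ^ d i) ∈ Submodule.span K (Set.range m) := by
    intro N
    induction N using Nat.strong_induction_on with
    | _ N ih =>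
      intro d hd
      by_cases hlt : ∀ i, d i < p
      · exact Submodule.subset_span ⟨fun i => ⟨d i, hlt i⟩, rfl⟩
      · push_neg at hlt
        obtain ⟨j, hj⟩ := hlt
        have hS : d j + ∑ i ∈ Finset.univ.erase j, d i = N := by
          rw [← hd, Finset.add_sum_erase _ _ (Finset.mem_univ j)]
        have hp2 := hp.two_le
        have hupd : ∀ (v : ℕ), (∏ i, α i ^ (Function.update d j v) i)
            = α j ^ v * ∏ i ∈ Finset.univ.erase j, α i ^ d i := by
          intro v
          rw [← Finset.mul_prod_erase Finset.univ _ (Finset.mem_univ j), Function.update_self]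
          congr 1
          exact Finset.prod_congr rfl fun i hi => by
            rw [Function.update_of_ne (Finset.ne_of_mem_erase hi)]
        have hsupd : ∀ (v : ℕ), (∑ i, (Function.update d j v) i)
            = v + ∑ i ∈ Finset.univ.erase j, d i := by
          intro v
          rw [← Finset.add_sum_erase Finset.univ _ (Finset.mem_univ j), Function.update_self]
          congr 1
          exact Finset.sum_congr rfl fun i hi => by
            rw [Function.update_of_ne (Finset.ne_of_mem_erase hi)]
        have key : (∏ i, α i ^ d i)
            = (∏ i, α i ^ (Function.update d j (d j - p + 1)) i)
              + algebraMap K L (f j) * ∏ i, α i ^ (Function.update d j (d j - p)) i := by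
          rw [hupd, hupd, ← Finset.mul_prod_erase Finset.univ _ (Finset.mem_univ j)]
          have h1 : α j ^ d j = α j ^ (d j - p + 1) + algebraMap K L (f j) * α j ^ (d j - p) := by
            calc α j ^ d j = α j ^ (d j - p) * α j ^ p := by
                  rw [← pow_add, Nat.sub_add_cancel hj]
              _ = _ := by rw [hαp, pow_succ]; ring
          rw [h1]; ring
        rw [key]
        refine Submodule.add_mem _
          (ih ((d j - p + 1) + ∑ i ∈ Finset.univ.erase j, d i) (by omega) _ (hsupd _)) ?_
        rw [← Algebra.smul_def]
        exact Submodule.smul_mem _ _ (ih ((d j - p) + ∑ i ∈ Finset.univ.erase j, d i)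
          (by omega) _ (hsupd _))
  have hspan : ⊤ ≤ Submodule.span K (Set.range m) := by
    rw [← Algebra.top_toSubmodule, ← hgen, Algebra.adjoin_eq_span]
    refine Submodule.span_le.2 ?_
    intro z hz
    have : ∃ d : Fin n → ℕ, z = ∏ i, α i ^ d i := by
      refine Submonoid.closure_induction ?_ ?_ ?_ hz
      · rintro _ ⟨i, rfl⟩
        exact ⟨Pi.single i 1, by simp [Pi.single_apply, pow_ite]⟩
      · exact ⟨0, by simp⟩
      · rintro z w _ _ ⟨d, rfl⟩ ⟨d', rfl⟩
        exact ⟨d + d', by simp [pow_add, Finset.prod_mul_distrib]⟩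
    obtain ⟨d, rfl⟩ := this
    exact hmono _ d rfl
  have hcard : Fintype.card (Fin n → Fin p) = p ^ n := by
    simp [Fintype.card_fun]
  set B : Module.Basis (Fin n → Fin p) K L :=
    basisOfTopLeSpanOfCardEqFinrank m hspan (by rw [hcard, hdeg]) with hBdef
  have hB : ∀ e, B e = m e := fun e =>
    congrFun (coe_basisOfTopLeSpanOfCardEqFinrank m hspan (by rw [hcard, hdeg])) e
  -- delta vectors
  have hp1 : 1 < p := hp.one_lt
  set δ : Fin n → (Fin n → Fin p) := fun j => Pi.single j ⟨1, hp1⟩ with hδdef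
  have hδval : ∀ j i, ((δ j i : ℕ)) = if i = j then 1 else 0 := by
    intro j i
    rcases eq_or_ne i j with rfl | h
    · simp [hδdef]
    · simp [hδdef, Pi.single_apply, h]
  have hmδ : ∀ j, m (δ j) = α j := by
    intro j
    show (∏ i, α i ^ ((δ j) i : ℕ)) = α j
    rw [Finset.prod_eq_single j]
    · rw [hδval, if_pos rfl, pow_one]
    · intro i _ hij; rw [hδval, if_neg hij, pow_zero]
    · intro h; exact absurd (Finset.mem_univ j) h
  have hδinj : Function.Injective δ := by
    intro i j hij
    by_contra h
    have := congrFun hij i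
    rw [hδdef] at this
    simp [Pi.single_apply, h] at this
  have hdegδ : ∀ j, (∑ i, ((δ j) i : ℕ)) = 1 := by
    intro j
    rw [Finset.sum_eq_single j]
    · rw [hδval, if_pos rfl]
    · intro i _ hij; rw [hδval, if_neg hij]
    · intro h; exact absurd (Finset.mem_univ j) h
  -- repr of F_p-combinations of the α's
  have hrepr : ∀ (v : Fin n → ZMod p) (j : Fin n),
      B.repr (∑ i, (v i).val • α i) (δ j) = ((v j).val : K) := by
    intro v j
    have hv : (∑ i, (v i).val • α i) = ∑ i, ((v i).val : K) • B (δ i) := by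
      refine Finset.sum_congr rfl fun i _ => ?_
      rw [hB, hmδ, Nat.cast_smul_eq_nsmul]
    rw [hv, map_sum, Finsupp.finset_sum_apply]
    rw [Finset.sum_eq_single j]
    · rw [map_smul, B.repr_self, Finsupp.smul_apply, Finsupp.single_eq_same, smul_eq_mul,
        mul_one]
    · intro i _ hij
      rw [map_smul, B.repr_self, Finsupp.smul_apply,
        Finsupp.single_eq_of_ne' (fun hc => hij (hδinj hc)), smul_zero]
    · intro h; exact absurd (Finset.mem_univ j) h
  -- powers of an F_p-combination lie in the span of monomials of fixed degree
  have hpow : ∀ (v : Fin n → ZMod p) (k : ℕ), k < p →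
      (∑ i, (v i).val • α i) ^ k ∈
        Submodule.span K (B '' {e | (∑ i, (e i : ℕ)) = k}) := by
    intro v k
    induction k with
    | zero =>
      intro _
      refine Submodule.subset_span ⟨0, ?_, ?_⟩
      · simp
      · rw [hB, hm]; simp
    | succ k ihk =>
      intro hk
      rw [pow_succ]
      refine Submodule.span_induction
        (p := fun z _ => z * (∑ i, (v i).val • α i) ∈
          Submodule.span K (B '' {e | (∑ i, (e i : ℕ)) = k + 1}))
        ?_ ?_ ?_ ?_ (ihk (Nat.lt_of_succ_lt hk))
      · rintro z ⟨e, he, rfl⟩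
        rw [Finset.mul_sum]
        refine Submodule.sum_mem _ fun i _ => ?_
        rw [mul_smul_comm, ← Nat.cast_smul_eq_nsmul K]
        refine Submodule.smul_mem _ _ (Submodule.subset_span ?_)
        have hei : (e i : ℕ) + 1 < p := by
          have : (e i : ℕ) ≤ k := he ▸ Finset.single_le_sum
            (f := fun i => (e i : ℕ)) (fun _ _ => Nat.zero_le _) (Finset.mem_univ i)
          omega
        have he' : (∑ j, (e j : ℕ)) = k := he
        have hsrest : (∑ j ∈ Finset.univ.erase i, ((Function.update e i
            (⟨(e i : ℕ) + 1, hei⟩ : Fin p) j : ℕ))) = ∑ j ∈ Finset.univ.erase i, (e j : ℕ) :=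
          Finset.sum_congr rfl fun x hx => by
            rw [Function.update_of_ne (Finset.ne_of_mem_erase hx)]
        have hprest : (∏ j ∈ Finset.univ.erase i, α j ^ ((Function.update e i
            (⟨(e i : ℕ) + 1, hei⟩ : Fin p) j : ℕ))) = ∏ j ∈ Finset.univ.erase i, α j ^ (e j : ℕ) :=
          Finset.prod_congr rfl fun x hx => by
            rw [Function.update_of_ne (Finset.ne_of_mem_erase hx)]
        refine ⟨Function.update e i ⟨(e i : ℕ) + 1, hei⟩, ?_, ?_⟩
        · show (∑ j, ((Function.update e i (⟨(e i : ℕ) + 1, hei⟩ : Fin p)) j : ℕ)) = k + 1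
          have hval : ∀ j, ((Function.update e i (⟨(e i : ℕ) + 1, hei⟩ : Fin p)) j : ℕ)
              = Function.update (fun j => (e j : ℕ)) i ((e i : ℕ) + 1) j := by
            intro j
            rcases eq_or_ne j i with rfl | h
            · simp
            · simp [Function.update_of_ne h]
          rw [Finset.sum_congr rfl (fun j _ => hval j),
            Finset.sum_update_of_mem (Finset.mem_univ i)]
          have he3 : (∑ x : Fin n, (e x : ℕ))
              = (∑ x ∈ Finset.univ \ {i}, (e x : ℕ)) + (e i : ℕ) :=
            Finset.sum_eq_sum_sdiff_singleton_add (Finset.mem_univ i) _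
          omega
        · show B (Function.update e i ⟨(e i : ℕ) + 1, hei⟩) = B e * α i
          rw [hB, hB]
          show (∏ j, α j ^ ((Function.update e i (⟨(e i : ℕ) + 1, hei⟩ : Fin p)) j : ℕ))
            = (∏ j, α j ^ (e j : ℕ)) * α i
          have h2 := Finset.mul_prod_erase Finset.univ
            (fun j => α j ^ ((Function.update e i (⟨(e i : ℕ) + 1, hei⟩ : Fin p)) j : ℕ))
            (Finset.mem_univ i)
          simp only [Function.update_self, Fin.val_mk] at h2
          rw [← h2, hprest,
            ← Finset.mul_prod_erase Finset.univ (fun j => α j ^ (e j : ℕ)) (Finset.mem_univ i),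
            pow_succ]
          ring
      · show (0 : L) * (∑ i, (v i).val • α i) ∈ _
        rw [zero_mul]; exact Submodule.zero_mem _
      · intro z w _ _ hz hw
        show (z + w) * (∑ i, (v i).val • α i) ∈ _
        rw [add_mul]; exact Submodule.add_mem _ hz hw
      · intro c z _ hz
        show (c • z) * (∑ i, (v i).val • α i) ∈ _
        rw [smul_mul_assoc]; exact Submodule.smul_mem _ _ hz
  -- characteristic of L and Fermat
  haveI hLp : CharP L p := charP_of_injective_algebraMap (algebraMap K L).injective p
  have hfermat : ∀ (v : ZMod p), ((v.val : L)) ^ p = (v.val : L) := by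
    intro v
    rw [← Nat.cast_pow]
    refine (CharP.natCast_eq_natCast L p).2 ?_
    refine (ZMod.natCast_eq_natCast_iff _ _ _).1 ?_
    push_cast
    exact ZMod.pow_card _
  have hxp : ∀ (v : Fin n → ZMod p),
      (∑ i, (v i).val • α i) ^ p - (∑ i, (v i).val • α i)
        = algebraMap K L (∑ i, (v i).val • f i) := by
    intro v
    rw [sum_pow_char, map_sum, ← Finset.sum_sub_distrib]
    refine Finset.sum_congr rfl fun i _ => ?_
    rw [nsmul_eq_mul, mul_pow, hfermat, ← mul_sub, hAS i, map_nsmul, nsmul_eq_mul]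
  constructor
  · -- hard direction
    intro heq
    have hyx : (∑ i, (b i).val • α i) ∈
        Algebra.adjoin K {(∑ i, (a i).val • α i : L)} := by
      rw [heq]; exact Algebra.self_mem_adjoin_singleton K _
    rw [Algebra.adjoin_singleton_eq_range_aeval] at hyx
    obtain ⟨q, hq⟩ := hyx
    set x := (∑ i, (a i).val • α i : L) with hxdef
    set g : Polynomial K :=
      Polynomial.X ^ p - (Polynomial.X + Polynomial.C (∑ i, (a i).val • f i)) with hgdef
    have hgmon : g.Monic := Polynomial.monic_X_pow_sub (by
      rw [Polynomial.degree_X_add_C]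
      exact_mod_cast hp.one_lt)
    have hgx : Polynomial.aeval x g = 0 := by
      rw [hgdef]
      simp only [map_sub, map_add, map_pow, Polynomial.aeval_X, Polynomial.aeval_C]
      have h1 := hxp a
      rw [← hxdef] at h1
      rw [sub_add_eq_sub_sub, h1, sub_self]
    set r := q %ₘ g with hrdef
    have hry : Polynomial.aeval x r = ∑ i, (b i).val • α i := by
      have hdiv := Polynomial.modByMonic_add_div q g
      have hq' : Polynomial.aeval x q = ∑ i, (b i).val • α i := hq
      rw [← hq', ← hdiv, map_add, map_mul, hgx, zero_mul, add_zero]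
    have hdeg_r : r.natDegree < p := by
      by_cases h0 : r = 0
      · rw [h0]; simpa using hp.pos
      · have h1 : r.degree < g.degree := Polynomial.degree_modByMonic_lt q hgmon
        have h2 : g.degree = (p : ℕ) := by
          rw [hgdef, Polynomial.degree_sub_eq_left_of_degree_lt, Polynomial.degree_X_pow]
          rw [Polynomial.degree_X_pow, Polynomial.degree_X_add_C]
          exact_mod_cast hp.one_lt
        rw [h2] at h1
        exact (Polynomial.natDegree_lt_iff_degree_lt h0).2 h1
    have hyB : (∑ i, (b i).val • α i) = ∑ k ∈ Finset.range p, r.coeff k • x ^ k := by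
      rw [← hry, Polynomial.aeval_eq_sum_range' hdeg_r]
    have hcoef : ∀ j, ((b j).val : K) = r.coeff 1 * ((a j).val : K) := by
      intro j
      have h1 : B.repr (∑ i, (b i).val • α i) (δ j) = ((b j).val : K) := hrepr b j
      rw [hyB, map_sum, Finsupp.finset_sum_apply] at h1
      rw [Finset.sum_eq_single_of_mem 1 (Finset.mem_range.2 hp.one_lt)] at h1
      · rw [pow_one, map_smul, Finsupp.smul_apply, hxdef, hrepr a j, smul_eq_mul] at h1
        exact h1.symm
      · intro k hk hk1
        rw [map_smul, Finsupp.smul_apply]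
        have hsup : B.repr (x ^ k) (δ j) = 0 := by
          have hmem := hpow a k (Finset.mem_range.1 hk)
          rw [← hxdef, Module.Basis.mem_span_image] at hmem
          by_contra hcon
          have h3 : (∑ i, ((δ j) i : ℕ)) = k := hmem (Finsupp.mem_support_iff.2 hcon)
          rw [hdegδ j] at h3
          exact hk1 h3.symm
        rw [hsup, smul_zero]
    set φ : ZMod p →+* K := ZMod.castHom dvd_rfl K with hφdef
    have hφv : ∀ v : ZMod p, ((v.val : ℕ) : K) = φ v := fun v => by
      rw [hφdef, ZMod.castHom_apply, ZMod.natCast_val]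
    obtain ⟨j, hj⟩ := Function.ne_iff.1 ha
    have hφinj : Function.Injective φ := φ.injective
    have hφaj : φ (a j) ≠ 0 := fun h => hj (hφinj (h.trans (map_zero φ).symm))
    have hc1 : r.coeff 1 * φ (a j) = φ (b j) := by
      rw [← hφv, ← hφv]; exact (hcoef j).symm
    have hball : ∀ i, b i = (b j * (a j)⁻¹) * a i := by
      intro i
      apply hφinj
      have h2 : φ (b i) = r.coeff 1 * φ (a i) := by
        rw [← hφv, ← hφv]; exact hcoef i
      rw [h2, map_mul, map_mul, map_inv₀, ← hc1]
      field_simp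
    have hcne : b j * (a j)⁻¹ ≠ 0 := by
      intro h
      apply hb
      funext i
      rw [Pi.zero_apply, hball i, h, zero_mul]
    exact ⟨(b j * (a j)⁻¹)⁻¹, funext fun i => by
      rw [Pi.smul_apply, smul_eq_mul, hball i, ← mul_assoc,
        inv_mul_cancel₀ hcne, one_mul]⟩
  · -- easy direction
    rintro ⟨c, rfl⟩
    have hc0 : c ≠ 0 := by rintro rfl; simp at ha
    have hcv : ((c.val : K)) ≠ 0 := by
      have h1 : c.val ≠ 0 := fun h => hc0 (by rwa [← ZMod.val_eq_zero])
      have h2 : c.val < p := ZMod.val_lt c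
      intro h
      rw [CharP.cast_eq_zero_iff K p] at h
      exact absurd (Nat.le_of_dvd (Nat.pos_of_ne_zero h1) h) (by omega)
    have hxy : (∑ i, ((c • b) i).val • α i : L)
        = algebraMap K L (c.val : K) * ∑ i, (b i).val • α i := by
      rw [Finset.mul_sum]
      refine Finset.sum_congr rfl fun i _ => ?_
      rw [Pi.smul_apply, smul_eq_mul, nsmul_eq_mul, nsmul_eq_mul, map_natCast,
        ← mul_assoc, ← Nat.cast_mul]
      congr 1
      refine (CharP.natCast_eq_natCast L p).2 ?_
      show (c * b i).val ≡ c.val * (b i).val [MOD p]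
      rw [ZMod.val_mul]
      exact Nat.mod_modEq _ p
    apply le_antisymm
    · rw [Algebra.adjoin_le_iff]
      intro z hz
      rw [Set.mem_singleton_iff] at hz
      subst hz
      rw [hxy, ← Algebra.smul_def]
      exact Subalgebra.smul_mem _ (Algebra.self_mem_adjoin_singleton K _) _
    · rw [Algebra.adjoin_le_iff]
      intro z hz
      rw [Set.mem_singleton_iff] at hz
      subst hz
      have hy2 : (∑ i, (b i).val • α i : L)
          = (c.val : K)⁻¹ • (∑ i, ((c • b) i).val • α i : L) := by
        rw [hxy, ← Algebra.smul_def, smul_smul, inv_mul_cancel₀ hcv, one_smul]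
      rw [hy2]
      exact Subalgebra.smul_mem _ (Algebra.self_mem_adjoin_singleton K _) _
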